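/- For the single-substitution error ball B^S the following hold: (a) there exist real constants c1, c2 and an even integer n0 such that for every even n ≥ n0 and each N ∈ {1,2}, (3/2)·log2 n + c1 ≤ ρ_b(n,N;B^S) ≤ (3/2)·log2 n + c2; (b) for every integer N ≥ 3 and every even n ≥ 2, ρ_b(n,N;B^S) = Δ = n − log2 C(n, n/2). -/

import Mathlib

namespace BRC

/-- Hamming distance between two binary words (of the same length). -/
def hammingDist (x y : List Bool) : ℕ :=
  (List.zip x y).countP (fun p => p.1 != p.2)

/-- `balanced n` is the set `U_n` of binary words of length `n` with exactly `n/2` ones. -/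
def balanced (n : ℕ) : Set (List Bool) :=
  {x | x.length = n ∧ x.count true = n / 2}

/-- `B^S(x)`: words obtained from `x` by at most one substitution. -/
def BS (x : List Bool) : Set (List Bool) :=
  {y | y.length = x.length ∧ hammingDist x y ≤ 1}

/-- `B^D(x)`: words obtained from `x` by deleting one symbol. -/
def BD (x : List Bool) : Set (List Bool) :=
  {y | ∃ (u v : List Bool) (b : Bool), x = u ++ b :: v ∧ y = u ++ v}

/-- `B^I(x)`: words obtained from `x` by inserting one symbol. -/
def BI (x : List Bool) : Set (List Bool) :=
  {y | ∃ (u v : List Bool) (b : Bool), x = u ++ v ∧ y = u ++ b :: v}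

def BDI (x : List Bool) : Set (List Bool) := BD x ∪ BI x
def BSD (x : List Bool) : Set (List Bool) := BS x ∪ BD x
def BSI (x : List Bool) : Set (List Bool) := BS x ∪ BI x
def Bedit (x : List Bool) : Set (List Bool) := BS x ∪ BD x ∪ BI x

/-- `C` is a balanced `(n,N;B)`-reconstruction code: `C ⊆ U_n` and `ν(C;B) < N`. -/
def reconCode (n N : ℕ) (B : List Bool → Set (List Bool)) (C : Set (List Bool)) : Prop :=
  C ⊆ balanced n ∧ ∀ x ∈ C, ∀ y ∈ C, x ≠ y → (B x ∩ B y).ncard < N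

/-- `ρ_b(n,N;B)`: optimal redundancy of a balanced `(n,N;B)`-reconstruction code. -/
noncomputable def rho (n N : ℕ) (B : List Bool → Set (List Bool)) : ℝ :=
  sInf {r : ℝ | ∃ C : Set (List Bool),
    reconCode n N B C ∧ r = (n : ℝ) - Real.logb 2 (C.ncard : ℝ)}

/-- `(10)^m`. -/
def pat10 (m : ℕ) : List Bool := (List.replicate m [true, false]).flatten
/-- `(01)^m`. -/
def pat01 (m : ℕ) : List Bool := (List.replicate m [false, true]).flatten

/-- Type-A-confusable with parameter `m`: `{c, c'} = {(10)^m, (01)^m}`. -/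
def TypeAWith (m : ℕ) (x y : List Bool) : Prop :=
  ∃ u v : List Bool,
    (x = u ++ pat10 m ++ v ∧ y = u ++ pat01 m ++ v) ∨
    (x = u ++ pat01 m ++ v ∧ y = u ++ pat10 m ++ v)

/-- Type-A-confusable (with some `m ≥ 1`). -/
def TypeA (x y : List Bool) : Prop := ∃ m, 1 ≤ m ∧ TypeAWith m x y

/-- Type-B-confusable with parameter `m`:
`{c, c'} = {0 1^m, 1^m 0}` or `{c, c'} = {1 0^m, 0^m 1}`. -/
def TypeBWith (m : ℕ) (x y : List Bool) : Prop :=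
  ∃ u v : List Bool,
    ((x = u ++ (false :: List.replicate m true) ++ v ∧
        y = u ++ (List.replicate m true ++ [false]) ++ v) ∨
     (x = u ++ (List.replicate m true ++ [false]) ++ v ∧
        y = u ++ (false :: List.replicate m true) ++ v)) ∨
    ((x = u ++ (true :: List.replicate m false) ++ v ∧
        y = u ++ (List.replicate m false ++ [true]) ++ v) ∨
     (x = u ++ (List.replicate m false ++ [true]) ++ v ∧
        y = u ++ (true :: List.replicate m false) ++ v))

/-- Type-B-confusable (with some `m ≥ 2`). -/
def TypeB (x y : List Bool) : Prop := ∃ m, 2 ≤ m ∧ TypeBWith m x y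

/-- Number of runs of a binary word. -/
def numRuns (x : List Bool) : ℕ := (x.destutter (· ≠ ·)).length

/-- `V_{n-1}`: binary words of length `n-1` with Hamming weight `n/2` or `n/2 - 1`. -/
def Vset (n : ℕ) : Set (List Bool) :=
  {x | x.length = n - 1 ∧ (x.count true = n / 2 ∨ x.count true = n / 2 - 1)}

/-- VT weighted sum `Σ_{i=1}^n i·x_i` (positions indexed from 1). -/
def vtSum (x : List Bool) : ℕ :=
  ((x.zipIdx.map Prod.swap).map (fun p => if p.2 then p.1 + 1 else 0)).sum

/-- The balanced Varshamov–Tenengolts code `BVT_a(n)`. -/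
def BVT (n a : ℕ) : Set (List Bool) :=
  {x | x ∈ balanced n ∧ vtSum x ≡ a [MOD n + 1]}

/-- `R_2^b(n,1,m)`: balanced words of length `n` all of whose runs have length at most `m`. -/
def R1 (n m : ℕ) : Set (List Bool) :=
  {x | x ∈ balanced n ∧ ∀ b : Bool, ¬ (List.replicate (m + 1) b <:+: x)}



/-! ### Auxiliary lemmas -/

section Aux

lemma hd_cons (a b : Bool) (x y : List Bool) :
    hammingDist (a::x) (b::y) = hammingDist x y + (if a != b then 1 else 0) := by
  simp [hammingDist, List.countP_cons]

lemma hd_self (x : List Bool) : hammingDist x x = 0 := by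
  induction x with
  | nil => rfl
  | cons a x ih => simp [hd_cons, ih]

lemma hd_symm : ∀ x y : List Bool, x.length = y.length → hammingDist x y = hammingDist y x
  | [], [], _ => rfl
  | a::x, b::y, h => by
    simp only [List.length_cons, Nat.add_right_cancel_iff] at h
    cases a <;> cases b <;> simp [hd_cons, hd_symm x y h]
  | [], _::_, h => by simp at h
  | _::_, [], h => by simp at h

lemma hd_eq_zero : ∀ x y : List Bool, x.length = y.length → hammingDist x y = 0 → x = y
  | [], [], _, _ => rfl
  | a::x, b::y, h, h2 => by
    simp only [List.length_cons, Nat.add_right_cancel_iff] at h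
    rw [hd_cons] at h2
    have : hammingDist x y = 0 ∧ a = b := by
      cases a <;> cases b <;> simp_all
    rw [hd_eq_zero x y h this.1, this.2]
  | [], _::_, h, _ => by simp at h
  | _::_, [], h, _ => by simp at h

lemma hd_triangle : ∀ x y z : List Bool, x.length = y.length → y.length = z.length →
    hammingDist x z ≤ hammingDist x y + hammingDist y z
  | [], [], [], _, _ => by simp [hammingDist]
  | a::x, b::y, c::z, h1, h2 => by
    simp only [List.length_cons, Nat.add_right_cancel_iff] at h1 h2
    have := hd_triangle x y z h1 h2
    cases a <;> cases b <;> cases c <;> simp [hd_cons] <;> omega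
  | [], [], _::_, _, h => by simp at h
  | [], _::_, _, h, _ => by simp at h
  | _::_, [], _, h, _ => by simp at h
  | _::_, _::_, [], _, h => by simp at h

lemma count_le_hd : ∀ x y : List Bool, x.length = y.length →
    x.count true ≤ y.count true + hammingDist x y ∧
    y.count true ≤ x.count true + hammingDist x y
  | [], [], _ => by simp [hammingDist]
  | a::x, b::y, h => by
    simp only [List.length_cons, Nat.add_right_cancel_iff] at h
    have := count_le_hd x y h
    cases a <;> cases b <;> simp [hd_cons, List.count_cons] <;> omega
  | [], _::_, h => by simp at h
  | _::_, [], h => by simp at h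

lemma hd_parity : ∀ x y : List Bool, x.length = y.length →
    Even (hammingDist x y + x.count true + y.count true)
  | [], [], _ => by simp [hammingDist]
  | a::x, b::y, h => by
    simp only [List.length_cons, Nat.add_right_cancel_iff] at h
    have := hd_parity x y h
    rw [Nat.even_iff] at *
    cases a <;> cases b <;> simp [hd_cons, List.count_cons] <;> omega
  | [], _::_, h => by simp at h
  | _::_, [], h => by simp at h

lemma hd_set_le_one : ∀ (x : List Bool) (i : ℕ) (b : Bool), hammingDist x (x.set i b) ≤ 1
  | [], _, _ => by simp [hammingDist]
  | a::x, 0, b => by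
    have : hammingDist x x = 0 := hd_self x
    simp [hd_cons, this]; split <;> omega
  | a::x, i+1, b => by
    have := hd_set_le_one x i b
    simp [hd_cons, List.set_cons_succ]; omega
lemma mem_BS {x y : List Bool} : y ∈ BS x ↔ y.length = x.length ∧ hammingDist x y ≤ 1 :=
  Iff.rfl

lemma subset_two : ∀ x y : List Bool, x.length = y.length → x ≠ y →
    ∃ z1 z2, BS x ∩ BS y ⊆ {z1, z2}
  | [], [], _, hne => absurd rfl hne
  | [], _::_, h, _ => by simp at h
  | _::_, [], h, _ => by simp at h
  | a::x, b::y, h, hne => by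
    simp only [List.length_cons, Nat.add_right_cancel_iff] at h
    by_cases htl : x = y
    · -- then a ≠ b
      subst htl
      have hab : a ≠ b := fun hab => hne (by rw [hab])
      refine ⟨a::x, b::x, ?_⟩
      rintro z ⟨⟨hz1, hd1⟩, ⟨hz2, hd2⟩⟩
      match z with
      | [] => simp at hz1
      | c::w =>
        simp only [List.length_cons, Nat.add_right_cancel_iff] at hz1 hz2
        rw [hd_cons] at hd1 hd2
        by_cases hca : c = a
        · subst hca
          have : hammingDist x w = 0 := by
            have : (b != c) = true := by cases b <;> cases c <;> simp_all
            simp [this] at hd2; omega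
          have := hd_eq_zero x w hz1.symm this
          left; rw [← this]
        · have hcb : c = b := by cases b <;> cases c <;> simp_all
          subst hcb
          have : hammingDist x w = 0 := by
            have : (a != c) = true := by cases a <;> cases c <;> simp_all
            simp [this] at hd1; omega
          have := hd_eq_zero x w hz1.symm this
          right; rw [← this]; rfl
    · by_cases hab : a = b
      · subst hab
        obtain ⟨z1, z2, hsub⟩ := subset_two x y h htl
        refine ⟨a::z1, a::z2, ?_⟩
        rintro z ⟨⟨hz1, hd1⟩, ⟨hz2, hd2⟩⟩
        match z with
        | [] => simp at hz1
        | c::w =>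
          simp only [List.length_cons, Nat.add_right_cancel_iff] at hz1 hz2
          rw [hd_cons] at hd1 hd2
          have hca : c = a := by
            by_contra hca
            have h1 : (a != c) = true := by cases a <;> cases c <;> simp_all
            simp [h1] at hd1 hd2
            exact htl ((hd_eq_zero x w hz1.symm (by omega)).trans
              (hd_eq_zero y w hz2.symm (by omega)).symm)
          subst hca
          have hw : w ∈ BS x ∩ BS y := by
            constructor
            · exact ⟨hz1, by simp at hd1; omega⟩
            · exact ⟨hz2, by simp at hd2; omega⟩
          rcases hsub hw with h' | h'
          · left; simp_all
          · right; simp_all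
      · refine ⟨a::y, b::x, ?_⟩
        rintro z ⟨⟨hz1, hd1⟩, ⟨hz2, hd2⟩⟩
        match z with
        | [] => simp at hz1
        | c::w =>
          simp only [List.length_cons, Nat.add_right_cancel_iff] at hz1 hz2
          rw [hd_cons] at hd1 hd2
          by_cases hca : c = a
          · subst hca
            have : (b != c) = true := by cases b <;> cases c <;> simp_all
            simp [this] at hd2
            have := hd_eq_zero y w hz2.symm (by omega)
            left; rw [← this]
          · have hcb : c = b := by cases b <;> cases c <;> simp_all
            subst hcb
            have : (a != c) = true := by cases a <;> cases c <;> simp_all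
            simp [this] at hd1
            have := hd_eq_zero x w hz1.symm (by omega)
            right; rw [← this]; rfl

lemma two_mem : ∀ x y : List Bool, x.length = y.length → x ≠ y →
    (BS x ∩ BS y).Nonempty →
    ∃ z1 z2, z1 ≠ z2 ∧ z1 ∈ BS x ∩ BS y ∧ z2 ∈ BS x ∩ BS y
  | [], [], _, hne, _ => absurd rfl hne
  | [], _::_, h, _, _ => by simp at h
  | _::_, [], h, _, _ => by simp at h
  | a::x, b::y, h, hne, hns => by
    simp only [List.length_cons, Nat.add_right_cancel_iff] at h
    obtain ⟨z, ⟨ha1', hb1'⟩, ⟨ha2', hb2'⟩⟩ := hns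
    match z, ha1', ha2', hb1', hb2' with
    | c::w, ha1', ha2', hb1', hb2' =>
    have ha1 : w.length = x.length := by simpa using ha1'
    have ha2 : w.length = y.length := by simpa using ha2'
    have hb1 : hammingDist x w + (if a != c then 1 else 0) ≤ 1 := by
      rw [hd_cons] at hb1'; exact hb1'
    have hb2 : hammingDist y w + (if b != c then 1 else 0) ≤ 1 := by
      rw [hd_cons] at hb2'; exact hb2'
    clear ha1' ha2' hb1' hb2'
    by_cases hab : a = b
    · subst hab
      have htl : x ≠ y := fun he => hne (by rw [he])
      have hca : c = a := by
        by_contra hca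
        have h1 : (a != c) = true := by cases a <;> cases c <;> simp_all
        rw [if_pos h1] at hb1 hb2
        exact htl ((hd_eq_zero x w ha1.symm (by omega)).trans
          (hd_eq_zero y w ha2.symm (by omega)).symm)
      rw [hca, bne_self_eq_false] at hb1 hb2
      obtain ⟨z1, z2, hne', hm1, hm2⟩ := two_mem x y h htl
        ⟨w, ⟨ha1, by simpa using hb1⟩, ⟨ha2, by simpa using hb2⟩⟩
      refine ⟨a::z1, a::z2, by simp [hne'], ⟨?_, ?_⟩, ⟨?_, ?_⟩⟩
      · exact ⟨by simpa using hm1.1.1, by rw [hd_cons]; simpa using hm1.1.2⟩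
      · exact ⟨by simpa using hm1.2.1, by rw [hd_cons]; simpa using hm1.2.2⟩
      · exact ⟨by simpa using hm2.1.1, by rw [hd_cons]; simpa using hm2.1.2⟩
      · exact ⟨by simpa using hm2.2.1, by rw [hd_cons]; simpa using hm2.2.2⟩
    · -- a ≠ b
      have hxy : hammingDist x y ≤ 1 := by
        by_cases hca : c = a
        · have h1 : (b != c) = true := by
            rw [hca]; cases a <;> cases b <;> simp_all
          rw [if_pos h1] at hb2
          have hw : w = y := (hd_eq_zero y w ha2.symm (by omega)).symm
          rw [hca, bne_self_eq_false, hw] at hb1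
          simpa using hb1
        · have hcb : c = b := by cases b <;> cases c <;> simp_all
          have h1 : (a != c) = true := by
            rw [hcb]; cases a <;> cases b <;> simp_all
          rw [if_pos h1] at hb1
          have hw : w = x := (hd_eq_zero x w ha1.symm (by omega)).symm
          rw [hcb, bne_self_eq_false, hw] at hb2
          rw [hd_symm x y h]
          simpa using hb2
      have hba : (b != a) = true := by cases a <;> cases b <;> simp_all
      have hab' : (a != b) = true := by cases a <;> cases b <;> simp_all
      refine ⟨a::y, b::x, by simp [hab], ⟨?_, ?_⟩, ⟨?_, ?_⟩⟩
      · exact ⟨by simp [h], by rw [hd_cons]; simpa⟩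
      · exact ⟨by simp, by rw [hd_cons, hd_self, if_pos hba]⟩
      · exact ⟨by simp, by rw [hd_cons, hd_self, if_pos hab']⟩
      · exact ⟨by simp [h], by rw [hd_cons, hd_symm y x h.symm]; simpa⟩

def Sset (n k : ℕ) : Set (List Bool) := {x | x.length = n ∧ x.count true = k}

lemma Sset_finite (n k : ℕ) : (Sset n k).Finite :=
  (List.finite_length_eq Bool n).subset (fun _ h => h.1)

lemma length_finite (n : ℕ) : {x : List Bool | x.length = n}.Finite :=
  List.finite_length_eq Bool n

lemma Sset_succ_zero (n : ℕ) : Sset (n+1) 0 = (List.cons false) '' Sset n 0 := by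
  ext x
  constructor
  · rintro ⟨h1, h2⟩
    match x with
    | [] => simp at h1
    | a::w =>
      have : a = false := by
        cases a
        · rfl
        · simp [List.count_cons] at h2
      subst this
      exact ⟨w, ⟨by simpa using h1, by simpa [List.count_cons] using h2⟩, rfl⟩
  · rintro ⟨w, ⟨h1, h2⟩, rfl⟩
    exact ⟨by simpa using h1, by simpa [List.count_cons] using h2⟩

lemma Sset_succ_succ (n k : ℕ) :
    Sset (n+1) (k+1) = (List.cons false) '' Sset n (k+1) ∪ (List.cons true) '' Sset n k := by
  ext x
  constructor
  · rintro ⟨h1, h2⟩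
    match x with
    | [] => simp at h1
    | a::w =>
      cases a
      · exact Or.inl ⟨w, ⟨by simpa using h1, by simpa [List.count_cons] using h2⟩, rfl⟩
      · exact Or.inr ⟨w, ⟨by simpa using h1, by
          simp [List.count_cons] at h2; omega⟩, rfl⟩
  · rintro (⟨w, ⟨h1, h2⟩, rfl⟩ | ⟨w, ⟨h1, h2⟩, rfl⟩)
    · exact ⟨by simpa using h1, by simpa [List.count_cons] using h2⟩
    · exact ⟨by simpa using h1, by simp [List.count_cons]; omega⟩

lemma ncard_Sset : ∀ n k : ℕ, (Sset n k).ncard = n.choose k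
  | 0, 0 => by
    have : Sset 0 0 = {([] : List Bool)} := by
      ext x; constructor
      · rintro ⟨h1, _⟩; simpa using List.length_eq_zero_iff.mp h1
      · rintro rfl; exact ⟨rfl, rfl⟩
    simp [this]
  | 0, k+1 => by
    have : Sset 0 (k+1) = ∅ := by
      ext x; simp only [Set.mem_empty_iff_false, iff_false]
      rintro ⟨h1, h2⟩
      rw [List.length_eq_zero_iff.mp h1] at h2
      simp at h2
    simp [this]
  | n+1, 0 => by
    rw [Sset_succ_zero, Set.ncard_image_of_injective _ (fun a b h => by injection h),
      ncard_Sset n 0]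
    simp
  | n+1, k+1 => by
    rw [Sset_succ_succ]
    rw [Set.ncard_union_eq ?dis ((Sset_finite n (k+1)).image _) ((Sset_finite n k).image _)]
    case dis =>
      rw [Set.disjoint_left]
      rintro a ⟨w, _, rfl⟩ ⟨w', _, h⟩
      injection h with h1 _
      exact Bool.false_ne_true (h1.symm)
    rw [Set.ncard_image_of_injective _ (fun a b h => by injection h),
      Set.ncard_image_of_injective _ (fun a b h => by injection h),
      ncard_Sset n (k+1), ncard_Sset n k, Nat.choose_succ_succ']
    omega

lemma cb_upper : ∀ m : ℕ, (2*m+1) * (Nat.centralBinom m)^2 ≤ 16^m := by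
  intro m
  induction m with
  | zero => simp [Nat.centralBinom]
  | succ m ih =>
    have key := Nat.succ_mul_centralBinom_succ m
    have hsq : ((m+1) * Nat.centralBinom (m+1))^2 = (2*(2*m+1)*Nat.centralBinom m)^2 := by
      rw [key]
    have expand : (m+1)^2 * ((2*(m+1)+1) * (Nat.centralBinom (m+1))^2)
        = (2*(m+1)+1) * (2*(2*m+1))^2 * (Nat.centralBinom m)^2 := by ring_nf; ring_nf at hsq; nlinarith [hsq]
    have step : (2*(m+1)+1) * (2*(2*m+1))^2 * (Nat.centralBinom m)^2
        ≤ 16 * (m+1)^2 * ((2*m+1) * (Nat.centralBinom m)^2) := by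
      have : (2*(m+1)+1) * (2*(2*m+1))^2 ≤ 16 * (m+1)^2 * (2*m+1) := by nlinarith
      nlinarith [this, sq_nonneg (Nat.centralBinom m)]
    have : (m+1)^2 * ((2*(m+1)+1) * (Nat.centralBinom (m+1))^2)
        ≤ (m+1)^2 * 16^(m+1) := by
      calc (m+1)^2 * ((2*(m+1)+1) * (Nat.centralBinom (m+1))^2)
          ≤ 16 * (m+1)^2 * ((2*m+1) * (Nat.centralBinom m)^2) := by rw [expand]; exact step
        _ ≤ 16 * (m+1)^2 * 16^m := by
            exact Nat.mul_le_mul_left _ ih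
        _ = (m+1)^2 * 16^(m+1) := by ring
    exact Nat.le_of_mul_le_mul_left this (by positivity)

lemma cb_lower : ∀ m : ℕ, 1 ≤ m → 16^m ≤ 4*m * (Nat.centralBinom m)^2 := by
  intro m
  induction m with
  | zero => omega
  | succ m ih =>
    intro _
    rcases Nat.eq_zero_or_pos m with rfl | hm
    · simp [Nat.centralBinom]
    have ih := ih hm
    have key := Nat.succ_mul_centralBinom_succ m
    have hsq : ((m+1) * Nat.centralBinom (m+1))^2 = (2*(2*m+1)*Nat.centralBinom m)^2 := by
      rw [key]
    have expand : (m+1)^2 * (4*(m+1) * (Nat.centralBinom (m+1))^2)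
        = 4*(m+1) * (2*(2*m+1))^2 * (Nat.centralBinom m)^2 := by nlinarith [hsq]
    have step : (m+1)^2 * (16 * (4 * m * (Nat.centralBinom m)^2))
        ≤ 4*(m+1) * (2*(2*m+1))^2 * (Nat.centralBinom m)^2 := by
      have h1 : (m+1)^2 * (16 * (4*m)) ≤ 4*(m+1) * (2*(2*m+1))^2 := by nlinarith
      nlinarith [h1, sq_nonneg (Nat.centralBinom m)]
    have : (m+1)^2 * 16^(m+1) ≤ (m+1)^2 * (4*(m+1) * (Nat.centralBinom (m+1))^2) := by
      calc (m+1)^2 * 16^(m+1) = (m+1)^2 * (16 * 16^m) := by ring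
        _ ≤ (m+1)^2 * (16 * (4*m*(Nat.centralBinom m)^2)) := by
            exact Nat.mul_le_mul_left _ (Nat.mul_le_mul_left _ ih)
        _ ≤ 4*(m+1) * (2*(2*m+1))^2 * (Nat.centralBinom m)^2 := step
        _ = (m+1)^2 * (4*(m+1) * (Nat.centralBinom (m+1))^2) := expand.symm
    exact Nat.le_of_mul_le_mul_left this (by positivity)

lemma enumFrom_sum : ∀ (x : List Bool) (n : ℕ),
    (((x.zipIdx n).map Prod.swap).map (fun p => if p.2 then p.1 + 1 else 0)).sum
      = vtSum x + n * x.count true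
  | [], n => by simp [vtSum]
  | a::x, n => by
    have h1 := enumFrom_sum x (n+1)
    have h0 := enumFrom_sum x 1
    rw [vtSum]
    simp only [List.zipIdx_cons, List.map_cons, Prod.swap_prod_mk, zero_add, List.sum_cons, h1, h0, List.count_cons]
    cases a <;> simp <;> ring
lemma vtSum_cons (a : Bool) (x : List Bool) :
    vtSum (a::x) = (if a then 1 else 0) + x.count true + vtSum x := by
  have h0 := enumFrom_sum x 1
  rw [vtSum]
  simp only [List.zipIdx_cons, List.map_cons, Prod.swap_prod_mk, zero_add, List.sum_cons, h0]
  cases a <;> simp [vtSum] <;> ring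

lemma vt_d1 : ∀ x y : List Bool, x.length = y.length → hammingDist x y = 1 →
    ∃ k : ℕ, k < x.length ∧
      (((vtSum x : ℤ) - vtSum y = (k+1) ∧ (x.count true : ℤ) - y.count true = 1) ∨
       ((vtSum x : ℤ) - vtSum y = -(k+1) ∧ (x.count true : ℤ) - y.count true = -1))
  | [], [], _, hd => by simp [hammingDist] at hd
  | [], _::_, h, _ => by simp at h
  | _::_, [], h, _ => by simp at h
  | a::x, b::y, h, hd => by
    simp only [List.length_cons, Nat.add_right_cancel_iff] at h
    rw [hd_cons] at hd
    by_cases hab : a = b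
    · subst hab
      rw [bne_self_eq_false] at hd
      obtain ⟨k, hk, hor⟩ := vt_d1 x y h (by simpa using hd)
      refine ⟨k+1, by simp; omega, ?_⟩
      rw [vtSum_cons, vtSum_cons, List.count_cons, List.count_cons]
      rcases hor with ⟨h1, h2⟩ | ⟨h1, h2⟩
      · left
        constructor
        · push_cast
          push_cast at h1 h2
          cases a <;> simp <;> linarith
        · push_cast; push_cast at h2; cases a <;> simp <;> linarith
      · right
        constructor
        · push_cast
          push_cast at h1 h2
          cases a <;> simp <;> linarith
        · push_cast; push_cast at h2; cases a <;> simp <;> linarith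
    · have h1 : (a != b) = true := by cases a <;> cases b <;> simp_all
      rw [if_pos h1] at hd
      have hxy : x = y := hd_eq_zero x y h (by omega)
      subst hxy
      refine ⟨0, by simp, ?_⟩
      rw [vtSum_cons, vtSum_cons, List.count_cons, List.count_cons]
      cases a <;> cases b <;> simp_all <;> push_cast <;> ring_nf <;> omega

lemma vt_d2 : ∀ x y : List Bool, x.length = y.length → x.count true = y.count true →
    hammingDist x y = 2 →
    ∃ k : ℕ, 1 ≤ k ∧ k < x.length ∧
      ((vtSum x : ℤ) - vtSum y = k ∨ (vtSum x : ℤ) - vtSum y = -(k:ℤ))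
  | [], [], _, _, hd => by simp [hammingDist] at hd
  | [], _::_, h, _, _ => by simp at h
  | _::_, [], h, _, _ => by simp at h
  | a::x, b::y, h, hc, hd => by
    simp only [List.length_cons, Nat.add_right_cancel_iff] at h
    rw [hd_cons] at hd
    rw [List.count_cons, List.count_cons] at hc
    by_cases hab : a = b
    · subst hab
      rw [bne_self_eq_false] at hd
      have hc' : x.count true = y.count true := by cases a <;> simpa using hc
      obtain ⟨k, hk1, hk2, hor⟩ := vt_d2 x y h hc' (by simpa using hd)
      refine ⟨k, hk1, by simp; omega, ?_⟩
      rw [vtSum_cons, vtSum_cons]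
      have : ((if a then 1 else 0) : ℤ) + x.count true + vtSum x
          - ((if a then 1 else 0) + y.count true + vtSum y)
          = (vtSum x : ℤ) - vtSum y := by
        rw [hc']; push_cast; ring
      push_cast
      push_cast at this hor
      rcases hor with h1 | h1
      · left; linarith [this]
      · right; linarith [this]
    · have hb1 : (a != b) = true := by cases a <;> cases b <;> simp_all
      rw [if_pos hb1] at hd
      obtain ⟨k, hk, hor⟩ := vt_d1 x y h (by omega)
      refine ⟨k+1, by omega, by simp; omega, ?_⟩
      rw [vtSum_cons, vtSum_cons]
      rcases hor with ⟨h1, h2⟩ | ⟨h1, h2⟩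
      · -- tail count diff = 1, so a = false, b = true
        have : a = false ∧ b = true := by
          cases a <;> cases b <;> simp_all <;> push_cast at h2 <;> omega
        obtain ⟨rfl, rfl⟩ := this
        left
        push_cast
        push_cast at h1 h2
        simp
        linarith
      · have : a = true ∧ b = false := by
          cases a <;> cases b <;> simp_all <;> push_cast at h2 <;> omega
        obtain ⟨rfl, rfl⟩ := this
        right
        push_cast
        push_cast at h1 h2
        simp
        linarith

lemma balanced_eq (n : ℕ) : balanced n = Sset n (n / 2) := rfl

lemma BS_finite (x : List Bool) : (BS x).Finite :=
  (List.finite_length_eq Bool x.length).subset (fun _ hy => hy.1)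

lemma ball_card (x : List Bool) : x.length + 1 ≤ (BS x).ncard := by
  classical
  set g : Fin x.length → List Bool := fun i => x.set i.1 (!x[i.1]) with hg
  have hgmem : ∀ i, g i ∈ BS x := fun i => ⟨List.length_set, hd_set_le_one _ _ _⟩
  have hkey : ∀ (i j : Fin x.length), (g i)[j.1]'(by simp [hg, j.2]) =
      if i = j then !x[j.1] else x[j.1] := by
    intro i j
    by_cases h : i = j
    · subst h; simp [hg]
    · rw [if_neg h]
      exact List.getElem_set_ne (fun he => h (Fin.ext he)) _
  have hgx : ∀ i, g i ≠ x := by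
    intro i h
    have h1 := hkey i i
    rw [if_pos rfl] at h1
    have h2 : (g i)[i.1]'(by simp [hg, i.2]) = x[i.1]'i.2 := by
      simp_rw [h]
    rw [h1] at h2
    simp at h2
  have hinj : Function.Injective g := by
    intro i j h
    by_contra hne
    have h1 := hkey i j
    rw [if_neg hne] at h1
    have h2 := hkey j j
    rw [if_pos rfl] at h2
    have h3 : (g i)[j.1]'(by simp [hg, j.2]) = (g j)[j.1]'(by simp [hg, j.2]) := by
      simp_rw [h]
    rw [h1, h2] at h3
    simp at h3
  have hxmem : x ∈ BS x := ⟨rfl, by rw [hd_self]; omega⟩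
  set F : Finset (List Bool) := insert x (Finset.image g Finset.univ) with hF
  have hcard : F.card = x.length + 1 := by
    rw [hF, Finset.card_insert_of_notMem, Finset.card_image_of_injective _ hinj]
    · simp
    · intro hmem
      obtain ⟨i, _, hi⟩ := Finset.mem_image.mp hmem
      exact hgx i hi
  have hsub : (↑F : Set (List Bool)) ⊆ BS x := by
    intro z hz
    rcases Finset.mem_insert.mp hz with rfl | hz
    · exact hxmem
    · obtain ⟨i, _, rfl⟩ := Finset.mem_image.mp hz
      exact hgmem i
  calc x.length + 1 = (↑F : Set (List Bool)).ncard := by rw [Set.ncard_coe_finset, hcard]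
    _ ≤ (BS x).ncard := Set.ncard_le_ncard hsub (BS_finite x)

lemma intersect_small {n N : ℕ} {C : Set (List Bool)} (hC : reconCode n N BS C)
    (hN : N ≤ 2) {c c' : List Bool} (hc : c ∈ C) (hc' : c' ∈ C) (hne : c ≠ c') :
    BS c ∩ BS c' = ∅ := by
  by_contra hne'
  obtain ⟨z, hz⟩ := Set.nonempty_iff_ne_empty.mpr hne'
  have hlen : c.length = c'.length := by
    rw [(hC.1 hc).1, (hC.1 hc').1]
  obtain ⟨z1, z2, h12, hm1, hm2⟩ := two_mem c c' hlen hne ⟨z, hz⟩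
  have hfin : (BS c ∩ BS c').Finite := (BS_finite c).subset Set.inter_subset_left
  have h2 : 1 < (BS c ∩ BS c').ncard :=
    (Set.one_lt_ncard hfin).mpr ⟨z1, hm1, z2, hm2, h12⟩
  have := hC.2 c hc c' hc' hne
  omega

lemma packing {n N : ℕ} (hn : 2 ≤ n) (hN : N ≤ 2) {C : Set (List Bool)}
    (hC : reconCode n N BS C) : (n+1) * C.ncard ≤ 3 * n.choose (n/2) := by
  classical
  have hCfin : C.Finite := (Sset_finite n (n/2)).subset (by rw [← balanced_eq]; exact hC.1)
  set W : Set (List Bool) := Sset n (n/2 - 1) ∪ Sset n (n/2) ∪ Sset n (n/2 + 1) with hW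
  have hWfin : W.Finite :=
    ((Sset_finite n (n/2-1)).union (Sset_finite n (n/2))).union (Sset_finite n (n/2+1))
  have hWcard : W.ncard ≤ 3 * n.choose (n/2) := by
    calc W.ncard ≤ (Sset n (n/2 - 1) ∪ Sset n (n/2)).ncard + (Sset n (n/2+1)).ncard :=
          Set.ncard_union_le _ _
      _ ≤ (Sset n (n/2 - 1)).ncard + (Sset n (n/2)).ncard + (Sset n (n/2+1)).ncard := by
          have := Set.ncard_union_le (Sset n (n/2 - 1)) (Sset n (n/2)); omega
      _ = n.choose (n/2-1) + n.choose (n/2) + n.choose (n/2+1) := by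
          rw [ncard_Sset, ncard_Sset, ncard_Sset]
      _ ≤ 3 * n.choose (n/2) := by
          have h1 := Nat.choose_le_middle (n/2-1) n
          have h2 := Nat.choose_le_middle (n/2+1) n
          omega
  have hball : ∀ c ∈ C, BS c ⊆ W := by
    intro c hc y hy
    have hcb := hC.1 hc
    have hlen : y.length = n := by rw [hy.1, hcb.1]
    have hcnt := count_le_hd c y (by rw [hy.1])
    have hd1 := hy.2
    have hcc : c.count true = n / 2 := hcb.2
    have hn2 : 1 ≤ n / 2 := by omega
    have : y.count true = n/2 - 1 ∨ y.count true = n/2 ∨ y.count true = n/2 + 1 := by omega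
    rcases this with h | h | h
    · exact Or.inl (Or.inl ⟨hlen, h⟩)
    · exact Or.inl (Or.inr ⟨hlen, h⟩)
    · exact Or.inr ⟨hlen, h⟩
  set T := hCfin.toFinset with hT
  set t : List Bool → Finset (List Bool) := fun c => (BS_finite c).toFinset with ht
  have hdisj : ∀ c ∈ T, ∀ c' ∈ T, c ≠ c' → Disjoint (t c) (t c') := by
    intro c hc c' hc' hne
    rw [Set.Finite.mem_toFinset] at hc hc'
    rw [Finset.disjoint_left]
    intro z hz hz'
    rw [ht, Set.Finite.mem_toFinset] at hz hz'
    have := intersect_small hC hN hc hc' hne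
    exact absurd (Set.mem_inter hz hz') (by rw [this]; exact Set.notMem_empty z)
  have hbu := Finset.card_biUnion hdisj
  have hsub : T.biUnion t ⊆ hWfin.toFinset := by
    intro z hz
    obtain ⟨c, hc, hzc⟩ := Finset.mem_biUnion.mp hz
    rw [Set.Finite.mem_toFinset] at hc ⊢
    rw [ht, Set.Finite.mem_toFinset] at hzc
    exact hball c hc hzc
  have hsum : (n+1) * T.card ≤ ∑ c ∈ T, (t c).card := by
    calc (n+1) * T.card = ∑ _c ∈ T, (n+1) := by
          rw [Finset.sum_const, smul_eq_mul, Nat.mul_comm]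
      _ ≤ ∑ c ∈ T, (t c).card := by
          apply Finset.sum_le_sum
          intro c hc
          rw [Set.Finite.mem_toFinset] at hc
          have h1 := ball_card c
          rw [(hC.1 hc).1] at h1
          rw [ht]
          rw [← Set.ncard_eq_toFinset_card (BS c) (BS_finite c)]
          exact h1
  have hfin2 : (T.biUnion t).card ≤ W.ncard := by
    rw [Set.ncard_eq_toFinset_card W hWfin]
    exact Finset.card_le_card hsub
  have hTC : T.card = C.ncard := (Set.ncard_eq_toFinset_card C hCfin).symm
  rw [hTC] at hsum
  omega

lemma code_sq_bound {n N : ℕ} (hn : 2 ≤ n) (he : Even n) (hN : N ≤ 2)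
    {C : Set (List Bool)} (hC : reconCode n N BS C) :
    (n+1)^3 * C.ncard^2 ≤ 9 * 4^n := by
  obtain ⟨m, hm⟩ := he
  have hm' : n = 2 * m := by omega
  have hp := packing hn hN hC
  have hcb := cb_upper m
  have hch : n.choose (n/2) = Nat.centralBinom m := by
    rw [hm', Nat.centralBinom_eq_two_mul_choose]
    congr 1
    omega
  rw [hch] at hp
  have h1 : ((n+1) * C.ncard)^2 ≤ (3 * Nat.centralBinom m)^2 := Nat.pow_le_pow_left hp 2
  have h2 : (n+1) * ((n+1) * C.ncard)^2 ≤ (n+1) * (3 * Nat.centralBinom m)^2 :=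
    Nat.mul_le_mul_left _ h1
  have h3 : (n+1) * (3 * Nat.centralBinom m)^2 = 9 * ((2*m+1) * (Nat.centralBinom m)^2) := by
    rw [hm']; ring
  have h4 : (9:ℕ) * ((2*m+1) * (Nat.centralBinom m)^2) ≤ 9 * 16^m :=
    Nat.mul_le_mul_left _ hcb
  have h5 : (16:ℕ)^m = 4^n := by
    rw [hm', Nat.pow_mul]
  calc (n+1)^3 * C.ncard^2 = (n+1) * ((n+1) * C.ncard)^2 := by ring
    _ ≤ (n+1) * (3 * Nat.centralBinom m)^2 := h2
    _ = 9 * ((2*m+1) * (Nat.centralBinom m)^2) := h3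
    _ ≤ 9 * 16^m := h4
    _ = 9 * 4^n := by rw [h5]

lemma choose_sq_lower {n : ℕ} (hn : 2 ≤ n) (he : Even n) :
    4^n ≤ 2*n * (n.choose (n/2))^2 := by
  obtain ⟨m, hm⟩ := he
  have hm' : n = 2 * m := by omega
  have hcb := cb_lower m (by omega)
  have hch : n.choose (n/2) = Nat.centralBinom m := by
    rw [hm', Nat.centralBinom_eq_two_mul_choose]
    congr 1
    omega
  rw [hch, hm']
  calc (4:ℕ)^(2*m) = 16^m := by rw [Nat.pow_mul]
    _ ≤ 4*m * (Nat.centralBinom m)^2 := hcb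
    _ = 2*(2*m) * (Nat.centralBinom m)^2 := by ring

lemma bvt_recon {n N : ℕ} (a : ℕ) (hN : 1 ≤ N) : reconCode n N BS (BVT n a) := by
  constructor
  · exact fun x hx => hx.1
  · intro x hx y hy hne
    have hempty : BS x ∩ BS y = ∅ := by
      by_contra hne'
      obtain ⟨z, hz1, hz2⟩ := Set.nonempty_iff_ne_empty.mpr hne'
      have hlx : x.length = n := hx.1.1
      have hly : y.length = n := hy.1.1
      have hlz : z.length = x.length := hz1.1
      have htri := hd_triangle x z y hlz.symm (by rw [hlz, hlx, hly])
      have hsym := hd_symm y z (by rw [hlz, hlx, hly])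
      have hd2' : hammingDist x y ≤ 2 := by
        have := hz1.2
        have := hz2.2
        omega
      have hdne : hammingDist x y ≠ 0 := fun h0 =>
        hne (hd_eq_zero x y (by rw [hlx, hly]) h0)
      have hpar := hd_parity x y (by rw [hlx, hly])
      have hcnt : x.count true = y.count true := by rw [hx.1.2, hy.1.2]
      have hd2 : hammingDist x y = 2 := by
        rcases hpar with ⟨k, hk⟩
        rw [hcnt] at hk
        omega
      obtain ⟨k, hk1, hk2, hor⟩ := vt_d2 x y (by rw [hlx, hly]) hcnt hd2
      have hmod : vtSum x ≡ vtSum y [MOD n+1] := hx.2.trans hy.2.symm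
      have hdvd : ((n:ℤ)+1) ∣ (vtSum y : ℤ) - vtSum x := by
        have := hmod.dvd
        exact_mod_cast this
      have hdvd2 : ((n:ℤ)+1) ∣ (k : ℤ) := by
        rcases hor with h | h
        · have h' : (vtSum y : ℤ) - vtSum x = -(k:ℤ) := by linarith
          rw [h'] at hdvd
          exact dvd_neg.mp hdvd
        · have h' : (vtSum y : ℤ) - vtSum x = (k:ℤ) := by linarith
          rwa [h'] at hdvd
      have hdvd3 : (n+1) ∣ k := by
        have : ((n+1 : ℕ) : ℤ) ∣ (k : ℤ) := by exact_mod_cast hdvd2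
        exact_mod_cast this
      have : n + 1 ≤ k := Nat.le_of_dvd (by omega) hdvd3
      rw [hlx] at hk2
      omega
    rw [hempty]
    simpa using (show 0 < N from hN)

lemma bvt_pigeon (n : ℕ) : ∃ a, n.choose (n/2) ≤ (n+1) * (BVT n a).ncard := by
  classical
  have hUfin : (balanced n).Finite := by rw [balanced_eq]; exact Sset_finite n (n/2)
  set U := hUfin.toFinset with hU
  have hUcard : U.card = n.choose (n/2) := by
    rw [← Set.ncard_eq_toFinset_card (balanced n) hUfin, balanced_eq, ncard_Sset]
  have hmaps : ∀ x ∈ U, vtSum x % (n+1) ∈ Finset.range (n+1) := by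
    intro x _
    exact Finset.mem_range.mpr (Nat.mod_lt _ (by omega))
  have hsum := Finset.card_eq_sum_card_fiberwise hmaps
  have hex : ∃ b ∈ Finset.range (n+1),
      U.card ≤ (n+1) * (U.filter (fun x => vtSum x % (n+1) = b)).card := by
    apply Finset.exists_le_of_sum_le (Finset.nonempty_range_iff.mpr (by omega))
    apply le_of_eq
    calc ∑ _b ∈ Finset.range (n+1), U.card = (n+1) * U.card := by
          rw [Finset.sum_const, Finset.card_range, smul_eq_mul]
      _ = ∑ b ∈ Finset.range (n+1),
            (n+1) * (U.filter (fun x => vtSum x % (n+1) = b)).card := by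
          rw [← Finset.mul_sum, ← hsum]
  obtain ⟨a, ha, hcard⟩ := hex
  refine ⟨a, ?_⟩
  have halt : a < n + 1 := Finset.mem_range.mp ha
  have hset : BVT n a = ↑(U.filter (fun x => vtSum x % (n+1) = a)) := by
    ext x
    simp only [Finset.coe_filter, Set.mem_setOf_eq, hU, Set.Finite.mem_toFinset]
    constructor
    · rintro ⟨hb, hmod⟩
      refine ⟨hb, ?_⟩
      have : vtSum x % (n+1) = a % (n+1) := hmod
      rwa [Nat.mod_eq_of_lt halt] at this
    · rintro ⟨hb, hmod⟩
      refine ⟨hb, ?_⟩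
      show vtSum x % (n+1) = a % (n+1)
      rw [hmod, Nat.mod_eq_of_lt halt]
  rw [hset, Set.ncard_coe_finset]
  omega

lemma logb_mono {a b : ℕ} (ha : 1 ≤ a) (h : a ≤ b) : Real.logb 2 a ≤ Real.logb 2 b := by
  have ha' : (0:ℝ) < a := by exact_mod_cast ha
  have hb' : (0:ℝ) < b := by have : 1 ≤ b := le_trans ha h; exact_mod_cast this
  exact (Real.logb_le_logb (by norm_num) ha' hb').mpr (by exact_mod_cast h)

lemma recon_empty (n N : ℕ) (B : List Bool → Set (List Bool)) : reconCode n N B ∅ :=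
  ⟨Set.empty_subset _, fun x hx => absurd hx (Set.notMem_empty x)⟩

lemma rho_set_mem_n (n N : ℕ) (B : List Bool → Set (List Bool)) :
    ((n:ℝ)) ∈ {r : ℝ | ∃ C : Set (List Bool),
      reconCode n N B C ∧ r = (n : ℝ) - Real.logb 2 (C.ncard : ℝ)} := by
  exact ⟨∅, recon_empty n N B, by simp [Set.ncard_empty, Real.logb_zero]⟩

lemma elem_ge {n N : ℕ} {B : List Bool → Set (List Bool)} :
    ∀ r ∈ {r : ℝ | ∃ C : Set (List Bool),
      reconCode n N B C ∧ r = (n : ℝ) - Real.logb 2 (C.ncard : ℝ)},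
    (n:ℝ) - Real.logb 2 (n.choose (n/2) : ℝ) ≤ r := by
  rintro r ⟨C, hC, rfl⟩
  have hsub : C ⊆ Sset n (n/2) := by rw [← balanced_eq]; exact hC.1
  have hle : C.ncard ≤ n.choose (n/2) := by
    rw [← ncard_Sset n (n/2)]
    exact Set.ncard_le_ncard hsub (Sset_finite n (n/2))
  have hch1 : 1 ≤ n.choose (n/2) := Nat.choose_pos (Nat.div_le_self n 2)
  have hchnn : 0 ≤ Real.logb 2 (n.choose (n/2) : ℝ) :=
    Real.logb_nonneg (by norm_num) (by exact_mod_cast hch1)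
  rcases Nat.eq_zero_or_pos C.ncard with h0 | hpos
  · rw [h0]
    simp only [Nat.cast_zero, Real.logb_zero]
    linarith
  · have := logb_mono hpos hle
    linarith

lemma rho_bdd (n N : ℕ) (B : List Bool → Set (List Bool)) :
    BddBelow {r : ℝ | ∃ C : Set (List Bool),
      reconCode n N B C ∧ r = (n : ℝ) - Real.logb 2 (C.ncard : ℝ)} :=
  ⟨(n:ℝ) - Real.logb 2 (n.choose (n/2) : ℝ), fun r hr => elem_ge r hr⟩

lemma rho_ge (n N : ℕ) (B : List Bool → Set (List Bool)) :
    (n:ℝ) - Real.logb 2 (n.choose (n/2) : ℝ) ≤ rho n N B :=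
  le_csInf ⟨(n:ℝ), rho_set_mem_n n N B⟩ (fun r hr => elem_ge r hr)

lemma balanced_recon {n N : ℕ} (hN : 3 ≤ N) : reconCode n N BS (balanced n) := by
  refine ⟨subset_rfl, ?_⟩
  intro x hx y hy hne
  obtain ⟨z1, z2, hsub⟩ := subset_two x y (by rw [hx.1, hy.1]) hne
  have h2 : (BS x ∩ BS y).ncard ≤ 2 := by
    calc (BS x ∩ BS y).ncard ≤ ({z1, z2} : Set (List Bool)).ncard :=
          Set.ncard_le_ncard hsub (Set.toFinite _)
      _ ≤ ({z2} : Set (List Bool)).ncard + 1 := Set.ncard_insert_le z1 {z2}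
      _ = 2 := by rw [Set.ncard_singleton]
  omega

lemma part_b {n N : ℕ} (hN : 3 ≤ N) (hn : 2 ≤ n) :
    rho n N BS = (n:ℝ) - Real.logb 2 (n.choose (n/2) : ℝ) := by
  refine le_antisymm ?_ (rho_ge n N BS)
  apply csInf_le (rho_bdd n N BS)
  refine ⟨balanced n, balanced_recon hN, ?_⟩
  rw [balanced_eq, ncard_Sset]

lemma n36_bound {n : ℕ} (hn : 36 ≤ n) : (3/2) * Real.logb 2 n - 2 ≤ (n:ℝ) := by
  have hn0 : (0:ℝ) < n := by positivity
  have hnn : (0:ℝ) ≤ n := le_of_lt hn0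
  have hlog2 : (1/2 : ℝ) ≤ Real.log 2 := by
    have := Real.log_two_gt_d9
    linarith
  have hsqrt6 : (6:ℝ) ≤ Real.sqrt n := by
    rw [show (6:ℝ) = Real.sqrt 36 by
      rw [show (36:ℝ) = 6^2 by norm_num, Real.sqrt_sq (by norm_num)]]
    exact Real.sqrt_le_sqrt (by exact_mod_cast hn)
  have hsqpos : (0:ℝ) < Real.sqrt n := by linarith
  have hlogsqrt : Real.log (Real.sqrt n) ≤ Real.sqrt n - 1 :=
    Real.log_le_sub_one_of_pos hsqpos
  have hls : Real.log (Real.sqrt n) = Real.log n / 2 := Real.log_sqrt hnn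
  have hmul : 6 * Real.sqrt n ≤ (n:ℝ) := by
    calc 6 * Real.sqrt n ≤ Real.sqrt n * Real.sqrt n := by nlinarith
      _ = (n:ℝ) := Real.mul_self_sqrt hnn
  have hlogb : Real.logb 2 n ≤ 2 * Real.log n := by
    rw [Real.logb, div_le_iff₀ (by linarith)]
    have hlognn : 0 ≤ Real.log n := Real.log_nonneg (by exact_mod_cast le_trans (by norm_num) hn)
    nlinarith
  nlinarith

lemma logb_pow2 (k : ℕ) : Real.logb 2 ((2:ℝ)^k) = k := by
  rw [Real.logb_pow, Real.logb_self_eq_one (by norm_num : (1:ℝ) < 2)]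
  ring

lemma parta_lower {n N : ℕ} (he : Even n) (hn : 36 ≤ n) (hN2 : N ≤ 2) :
    (3/2) * Real.logb 2 n - 2 ≤ rho n N BS := by
  apply le_csInf ⟨(n:ℝ), rho_set_mem_n n N BS⟩
  rintro r ⟨C, hC, rfl⟩
  have hnat := code_sq_bound (by omega) he hN2 hC
  set A := C.ncard with hA
  rcases Nat.eq_zero_or_pos A with h0 | hpos
  · rw [h0]
    simp only [Nat.cast_zero, Real.logb_zero]
    have := n36_bound hn
    linarith
  · have hA1 : (1:ℝ) ≤ (A:ℝ) := by exact_mod_cast hpos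
    have hn1 : (1:ℝ) ≤ (n:ℝ) := by
      have : (36:ℝ) ≤ n := by exact_mod_cast hn
      linarith
    have hcast : ((n:ℝ)+1)^3 * (A:ℝ)^2 ≤ 9 * 4^n := by
      have : (((n+1)^3 * A^2 : ℕ) : ℝ) ≤ ((9 * 4^n : ℕ) : ℝ) := by exact_mod_cast hnat
      push_cast at this
      linarith
    have hlhs_pos : (0:ℝ) < ((n:ℝ)+1)^3 * (A:ℝ)^2 := by positivity
    have hkey : Real.logb 2 (((n:ℝ)+1)^3 * (A:ℝ)^2) ≤ Real.logb 2 (9 * 4^n) :=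
      (Real.logb_le_logb (by norm_num) hlhs_pos (by positivity)).mpr hcast
    have hlhs : Real.logb 2 (((n:ℝ)+1)^3 * (A:ℝ)^2)
        = 3 * Real.logb 2 ((n:ℝ)+1) + 2 * Real.logb 2 (A:ℝ) := by
      rw [Real.logb_mul (by positivity) (by positivity), Real.logb_pow, Real.logb_pow]
      push_cast
      ring
    have hrhs : Real.logb 2 ((9:ℝ) * 4^n) ≤ 4 + 2*n := by
      have h9 : ((9:ℝ) * 4^n) ≤ 16 * 4^n := by
        have : (0:ℝ) < (4:ℝ)^n := by positivity
        nlinarith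
      have h16 : (16:ℝ) * 4^n = 2^(4 + 2*n) := by
        rw [pow_add, pow_mul]
        norm_num
      calc Real.logb 2 ((9:ℝ) * 4^n) ≤ Real.logb 2 ((16:ℝ) * 4^n) :=
            (Real.logb_le_logb (by norm_num) (by positivity) (by positivity)).mpr h9
        _ = ((4 + 2*n : ℕ) : ℝ) := by rw [h16]; exact_mod_cast logb_pow2 (4 + 2*n)
        _ = 4 + 2*(n:ℝ) := by push_cast; ring
    have hmono : Real.logb 2 (n:ℝ) ≤ Real.logb 2 ((n:ℝ)+1) := by
      have := logb_mono (a := n) (b := n+1) (by omega) (by omega)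
      push_cast at this
      linarith
    rw [hlhs] at hkey
    linarith

lemma parta_upper {n N : ℕ} (he : Even n) (hn : 2 ≤ n) (hN1 : 1 ≤ N) :
    rho n N BS ≤ (3/2) * Real.logb 2 n + 2 := by
  obtain ⟨a, ha⟩ := bvt_pigeon n
  set A := (BVT n a).ncard with hA
  have hch1 : 1 ≤ n.choose (n/2) := Nat.choose_pos (Nat.div_le_self n 2)
  have hA1 : 1 ≤ A := by
    rcases Nat.eq_zero_or_pos A with h0 | h; · rw [h0] at ha; omega
    · exact h
  have hnat : 4^n ≤ 2*n * ((n+1) * A)^2 := by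
    refine le_trans (choose_sq_lower hn he) ?_
    exact Nat.mul_le_mul_left _ (Nat.pow_le_pow_left ha 2)
  have hrle : rho n N BS ≤ (n:ℝ) - Real.logb 2 (A:ℝ) :=
    csInf_le (rho_bdd n N BS) ⟨BVT n a, bvt_recon a hN1, rfl⟩
  have hA1' : (1:ℝ) ≤ (A:ℝ) := by exact_mod_cast hA1
  have hn1 : (1:ℝ) ≤ (n:ℝ) := by
    have : (2:ℝ) ≤ n := by exact_mod_cast hn
    linarith
  have hcast : (2:ℝ)^(2*n) ≤ 2*(n:ℝ) * (((n:ℝ)+1) * (A:ℝ))^2 := by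
    have h4 : ((4:ℕ):ℝ)^n = (2:ℝ)^(2*n) := by
      rw [pow_mul]; norm_num
    have : ((4^n : ℕ) : ℝ) ≤ ((2*n * ((n+1) * A)^2 : ℕ) : ℝ) := by exact_mod_cast hnat
    push_cast at this
    rw [← h4]
    push_cast
    linarith
  have hkey : Real.logb 2 ((2:ℝ)^(2*n)) ≤ Real.logb 2 (2*(n:ℝ) * (((n:ℝ)+1) * (A:ℝ))^2) :=
    (Real.logb_le_logb (by norm_num) (by positivity) (by positivity)).mpr hcast
  have hlhs : Real.logb 2 ((2:ℝ)^(2*n)) = 2*(n:ℝ) := by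
    have := logb_pow2 (2*n)
    rw [this]
    push_cast
    ring
  have hrhs : Real.logb 2 (2*(n:ℝ) * (((n:ℝ)+1) * (A:ℝ))^2)
      = 1 + Real.logb 2 (n:ℝ) + 2 * (Real.logb 2 ((n:ℝ)+1) + Real.logb 2 (A:ℝ)) := by
    have hne5 : (n:ℝ) ≠ 0 := by linarith
    have hne4 : (A:ℝ) ≠ 0 := by linarith
    have hne3 : ((n:ℝ)+1) ≠ 0 := by linarith
    have hne1 : (2*(n:ℝ)) ≠ 0 := by linarith
    have hne2 : ((((n:ℝ)+1)*(A:ℝ))^2) ≠ 0 := pow_ne_zero _ (mul_ne_zero hne3 hne4)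
    rw [Real.logb_mul hne1 hne2, Real.logb_pow,
      Real.logb_mul hne3 hne4,
      Real.logb_mul (by norm_num) hne5,
      Real.logb_self_eq_one (by norm_num : (1:ℝ) < 2)]
    push_cast
    ring
  have hmono : Real.logb 2 ((n:ℝ)+1) ≤ 1 + Real.logb 2 (n:ℝ) := by
    have h1 : Real.logb 2 ((n:ℝ)+1) ≤ Real.logb 2 (2*(n:ℝ)) := by
      apply (Real.logb_le_logb (by norm_num) (by positivity) (by linarith)).mpr
      linarith
    have h2 : Real.logb 2 (2*(n:ℝ)) = 1 + Real.logb 2 (n:ℝ) := by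
      rw [Real.logb_mul (by norm_num) (ne_of_gt (by linarith)),
        Real.logb_self_eq_one (by norm_num : (1:ℝ) < 2)]
    linarith
  rw [hlhs, hrhs] at hkey
  have hlast : (n:ℝ) - Real.logb 2 (A:ℝ) ≤ (3/2) * Real.logb 2 n + 2 := by linarith
  linarith

end Aux

/-- Theorem (substitution channel): asymptotic optimal redundancy for `B^S`. -/
theorem stmt0 :
    (∃ c1 c2 : ℝ, ∃ n0 : ℕ, Even n0 ∧ ∀ n : ℕ, Even n → n0 ≤ n →
      ∀ N : ℕ, N = 1 ∨ N = 2 →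
        (3 / 2) * Real.logb 2 (n : ℝ) + c1 ≤ rho n N BS ∧
        rho n N BS ≤ (3 / 2) * Real.logb 2 (n : ℝ) + c2) ∧
    (∀ N : ℕ, 3 ≤ N → ∀ n : ℕ, Even n → 2 ≤ n →
      rho n N BS = ((n : ℝ) - Real.logb 2 ((n.choose (n / 2) : ℕ) : ℝ))) := by
  constructor
  · refine ⟨-2, 2, 36, ⟨18, rfl⟩, ?_⟩
    intro n he hn N hN
    have hN1 : 1 ≤ N := by rcases hN with rfl | rfl <;> norm_num
    have hN2 : N ≤ 2 := by rcases hN with rfl | rfl <;> norm_num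
    constructor
    · have := parta_lower he hn hN2
      linarith
    · have := parta_upper he (by omega) hN1
      linarith
  · intro N hN n he hn
    exact part_b hN hn

end BRC
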